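/- Let G be a topological group and S a topological inverse semigroup whose idempotent semilattice E(S) has small semilattices. If θ: G → S is a continuous unital premorphism, then the associated homomorphism θ̃: G̃^R → S defined by θ̃({1,g₁,…,gₙ}, gₙ) = θ(g₁)θ(g₁)⁻¹ ⋯ θ(g_{n-1})θ(g_{n-1})⁻¹ θ(gₙ) is continuous, where G̃^R carries the topology inherited from K(G) × G with K(G) having the Vietoris topology. -/

import Mathlib

/-- An inverse monoid. -/
class InverseMonoid (S : Type*) extends Monoid S, Inv S where
  mul_inv_mul : ∀ a : S, a * a⁻¹ * a = a
  inv_mul_inv : ∀ a : S, a⁻¹ * a * a⁻¹ = a⁻¹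
  inv_unique : ∀ a b : S, a * b * a = a → b * a * b = b → b = a⁻¹

/-- A unital premorphism from a group to an inverse monoid. -/
def IsUnitalPremorphism {G S : Type*} [Group G] [InverseMonoid S] (θ : G → S) : Prop :=
  θ 1 = 1 ∧ (∀ g : G, θ g⁻¹ = (θ g)⁻¹) ∧
    ∀ g h : G, θ g⁻¹ * θ g * θ h = θ g⁻¹ * θ (g * h)

/-- The hyperspace of compact subsets of `G`. -/
abbrev KSet (G : Type*) [TopologicalSpace G] := {A : Set G // IsCompact A}

/-- The Vietoris topology on `K(G)`. -/
instance vietorisK (G : Type*) [TopologicalSpace G] : TopologicalSpace (KSet G) :=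
  .generateFrom {s | ∃ U : Set G, IsOpen U ∧
    (s = {A : KSet G | A.1 ⊆ U} ∨ s = {A : KSet G | (A.1 ∩ U).Nonempty})}

/-- The Birget–Rhodes expansion `G̃^R` as a subspace of `K(G) × G`:
pairs `(A,g)` with `A` finite and `{1,g} ⊆ A`. -/
abbrev BRtop (G : Type*) [Group G] [TopologicalSpace G] :=
  {p : KSet G × G // p.1.1.Finite ∧ (1 : G) ∈ p.1.1 ∧ p.2 ∈ p.1.1}

private lemma aux_prod_mem {S : Type*} [Monoid S] (V : Set S)
    (hV : ∀ x ∈ V, ∀ y ∈ V, x * y ∈ V) :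
    ∀ t : List S, t ≠ [] → (∀ x ∈ t, x ∈ V) → t.prod ∈ V
  | [], h, _ => absurd rfl h
  | [x], _, hm => by simpa using hm x (by simp)
  | x :: y :: t, _, hm => by
      rw [List.prod_cons]
      exact hV x (hm x (by simp)) _
        (aux_prod_mem V hV (y :: t) (by simp)
          (fun z hz => hm z (List.mem_cons_of_mem _ hz)))

private lemma aux_forall₂_congr {α β : Type*} {R R' : α → β → Prop} :
    ∀ {l : List α} {t : List β}, (∀ a ∈ l, ∀ b, R a b → R' a b) →
      List.Forall₂ R l t → List.Forall₂ R' l t := by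
  intro l t h hf
  induction hf with
  | nil => exact .nil
  | @cons a b l' t' h₁ _ ih =>
      exact .cons (h _ (by simp) _ h₁) (ih fun x hx b hb => h x (by simp [hx]) b hb)

private lemma aux_forall₂_map_self {α β : Type*} (g : α → β) (R : α → β → Prop) :
    ∀ l : List α, (∀ a ∈ l, R a (g a)) → List.Forall₂ R l (l.map g) := by
  intro l
  induction l with
  | nil => intro _; exact .nil
  | cons a l ih =>
      intro h
      exact .cons (h a (by simp)) (ih fun x hx => h x (by simp [hx]))

private lemma aux_split {G S : Type*} [Monoid S] [TopologicalSpace S]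
    (hmulc : Continuous fun p : S × S => p.1 * p.2) (c : G → S) :
    ∀ (l : List G), l.Nodup → ∀ (s : S) (W : Set S), IsOpen W → (l.map c).prod * s ∈ W →
    ∃ (V : G → Set S) (W' : Set S), IsOpen W' ∧ s ∈ W' ∧
      (∀ a ∈ l, IsOpen (V a) ∧ c a ∈ V a) ∧
      ∀ t : List S, List.Forall₂ (fun a x => x ∈ V a) l t →
        ∀ s' ∈ W', t.prod * s' ∈ W := by
  classical
  intro l
  induction l with
  | nil =>
      intro _ s W hW hmem
      refine ⟨fun _ => ∅, W, hW, by simpa using hmem, by simp, ?_⟩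
      intro t ht s' hs'
      rw [List.forall₂_nil_left_iff] at ht
      subst ht
      simpa using hs'
  | cons a l ih =>
      intro hnd s W hW hmem
      have hmem' : c a * ((l.map c).prod * s) ∈ W := by
        rw [← mul_assoc]
        simpa [mul_assoc] using hmem
      have h1 : (fun p : S × S => p.1 * p.2) ⁻¹' W ∈ nhds (c a, (l.map c).prod * s) :=
        hmulc.continuousAt (hW.mem_nhds hmem')
      rw [mem_nhds_prod_iff'] at h1
      obtain ⟨u, v, hu, hau, hv, hpv, huv⟩ := h1
      obtain ⟨V', W', hW', hsW', hVl, hprod⟩ := ih (List.nodup_cons.mp hnd).2 s v hv hpv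
      have hanl : a ∉ l := (List.nodup_cons.mp hnd).1
      refine ⟨fun b => if b = a then u else V' b, W', hW', hsW', ?_, ?_⟩
      · intro b hb
        rcases List.mem_cons.mp hb with rfl | hb
        · simpa using ⟨hu, hau⟩
        · have hba : b ≠ a := fun h => hanl (h ▸ hb)
          simpa [hba] using hVl b hb
      · intro t ht s' hs'
        cases ht with
        | cons hx ht' =>
            rename_i x t'
            have hx' : x ∈ u := by simpa using hx
            have ht'' : List.Forall₂ (fun b y => y ∈ V' b) l t' := by
              refine aux_forall₂_congr ?_ ht'
              intro b hb y hy
              have hba : b ≠ a := fun h => hanl (h ▸ hb)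
              simpa [hba] using hy
            have := hprod t' ht'' s' hs'
            have hmemuv : (x, t'.prod * s') ∈ u ×ˢ v := ⟨hx', this⟩
            have := huv hmemuv
            simpa [mul_assoc] using this


/-- for a topological group `G` and a topological inverse semigroup
`S` whose idempotent semilattice has small semilattices, if `θ : G → S` is a
continuous unital premorphism then the associated homomorphism
`θ̃(A,g) = (∏_{a ∈ A} θ(a)θ(a)⁻¹) · θ(g)` on `G̃^R ⊆ K(G) × G` is continuous
(the product formula being expressed via any enumeration of `A`). -/
theorem stmt16 {G S : Type*} [Group G] [TopologicalSpace G] [IsTopologicalGroup G]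
    [InverseMonoid S] [TopologicalSpace S]
    (hmulc : Continuous fun p : S × S => p.1 * p.2)
    (hinvc : Continuous fun s : S => s⁻¹)
    (hsmall : ∀ e : S, e * e = e → ∀ U ∈ nhds e, ∃ V ∈ nhds e,
      (V ∩ {x : S | x * x = x} ⊆ U) ∧
      ∀ a ∈ V ∩ {x : S | x * x = x}, ∀ b ∈ V ∩ {x : S | x * x = x},
        a * b ∈ V ∩ {x : S | x * x = x})
    (θ : G → S) (hθ : IsUnitalPremorphism θ) (hθc : Continuous θ)
    (Θ : BRtop G → S)
    (hΘ : ∀ (q : BRtop G) (l : List G), (∀ x : G, x ∈ l ↔ x ∈ q.1.1.1) →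
      Θ q = (l.map fun a => θ a * (θ a)⁻¹).prod * θ q.1.2) :
    Continuous Θ := by
  classical
  set f : G → S := fun a => θ a * (θ a)⁻¹ with hfdef
  have hfc : Continuous f := hmulc.comp (hθc.prodMk (hinvc.comp hθc))
  have hfe : ∀ a : G, f a * f a = f a := by
    intro a
    show (θ a * (θ a)⁻¹) * (θ a * (θ a)⁻¹) = θ a * (θ a)⁻¹
    rw [← mul_assoc, InverseMonoid.mul_inv_mul]
  rw [continuous_iff_continuousAt]
  intro q s hs
  rw [Filter.mem_map]
  obtain ⟨W, hWs, hW, hqW⟩ := mem_nhds_iff.mp hs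
  -- a nodup list enumerating the finite set of q
  set l₀ : List G := q.2.1.toFinset.toList with hl₀def
  have hmeml₀ : ∀ x : G, x ∈ l₀ ↔ x ∈ q.1.1.1 := by
    intro x
    rw [hl₀def, Finset.mem_toList, Set.Finite.mem_toFinset]
  have hnd : l₀.Nodup := Finset.nodup_toList _
  have hΘq : Θ q = (l₀.map f).prod * θ q.1.2 := hΘ q l₀ hmeml₀
  obtain ⟨V, W', hW'o, hW'mem, hVl, hprod⟩ :=
    aux_split hmulc f l₀ hnd (θ q.1.2) W hW (by rw [← hΘq]; exact hqW)
  -- small semilattice neighborhoods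
  have hchoice : ∀ a : G, ∃ V₂ : Set S, a ∈ l₀ →
      V₂ ∈ nhds (f a) ∧ (V₂ ∩ {x : S | x * x = x} ⊆ V a) ∧
      ∀ x ∈ V₂ ∩ {x : S | x * x = x}, ∀ y ∈ V₂ ∩ {x : S | x * x = x},
        x * y ∈ V₂ ∩ {x : S | x * x = x} := by
    intro a
    by_cases ha : a ∈ l₀
    · obtain ⟨V₂, h1, h2, h3⟩ :=
        hsmall (f a) (hfe a) (V a) ((hVl a ha).1.mem_nhds (hVl a ha).2)
      exact ⟨V₂, fun _ => ⟨h1, h2, h3⟩⟩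
    · exact ⟨∅, fun h => absurd h ha⟩
  choose V₂ hV₂ using hchoice
  set U : G → Set G := fun a => interior (f ⁻¹' V₂ a) with hUdef
  have hUopen : ∀ a : G, IsOpen (U a) := fun a => isOpen_interior
  have hUmem : ∀ a ∈ l₀, a ∈ U a := fun a ha =>
    mem_interior_iff_mem_nhds.mpr (hfc.continuousAt ((hV₂ a ha).1))
  set U' : Set G := θ ⁻¹' W' with hU'def
  have hU'open : IsOpen U' := hW'o.preimage hθc
  -- the neighborhood in the ambient space
  set N : Set (KSet G × G) :=
    (Prod.fst ⁻¹' {A : KSet G | A.1 ⊆ ⋃ a ∈ l₀, U a}) ∩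
      ((⋂ a ∈ l₀, Prod.fst ⁻¹' {A : KSet G | (A.1 ∩ U a).Nonempty}) ∩
        (Prod.snd ⁻¹' U')) with hNdef
  have hNopen : IsOpen N := by
    refine IsOpen.inter ?_ (IsOpen.inter ?_ ?_)
    · refine IsOpen.preimage continuous_fst ?_
      exact TopologicalSpace.GenerateOpen.basic _
        ⟨⋃ a ∈ l₀, U a, isOpen_biUnion (fun a _ => hUopen a), Or.inl rfl⟩
    · refine Set.Finite.isOpen_biInter (List.finite_toSet l₀) ?_
      intro a _
      refine IsOpen.preimage continuous_fst ?_
      exact TopologicalSpace.GenerateOpen.basic _ ⟨U a, hUopen a, Or.inr rfl⟩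
    · exact hU'open.preimage continuous_snd
  have hqN : q.1 ∈ N := by
    refine ⟨?_, ?_, ?_⟩
    · intro x hx
      exact Set.mem_biUnion ((hmeml₀ x).mpr hx) (hUmem x ((hmeml₀ x).mpr hx))
    · refine Set.mem_iInter₂.mpr ?_
      intro a ha
      exact ⟨a, (hmeml₀ a).mp ha, hUmem a ha⟩
    · exact hW'mem
  rw [mem_nhds_iff]
  refine ⟨Subtype.val ⁻¹' N, ?_, hNopen.preimage continuous_subtype_val, hqN⟩
  intro p hp
  apply hWs
  show Θ p ∈ W
  obtain ⟨hp1, hp2, hp3⟩ := hp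
  have hp2' : ∀ a ∈ l₀, (p.1.1.1 ∩ U a).Nonempty := fun a ha =>
    Set.mem_iInter₂.mp hp2 a ha
  -- enumerate p's set grouped by blocks
  set lB : List G := p.2.1.toFinset.toList with hlBdef
  have hmemlB : ∀ x : G, x ∈ lB ↔ x ∈ p.1.1.1 := by
    intro x
    rw [hlBdef, Finset.mem_toList, Set.Finite.mem_toFinset]
  set block : G → List G := fun a => lB.filter (fun b => decide (b ∈ U a)) with hblockdef
  have hblockmem : ∀ a : G, ∀ b : G, b ∈ block a ↔ b ∈ lB ∧ b ∈ U a := by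
    intro a b
    simp [hblockdef, List.mem_filter]
  set l : List G := l₀.flatMap block with hldef
  have hmem_l : ∀ x : G, x ∈ l ↔ x ∈ p.1.1.1 := by
    intro x
    constructor
    · intro hx
      obtain ⟨a, _, hxa⟩ := List.mem_flatMap.mp hx
      exact (hmemlB x).mp ((hblockmem a x).mp hxa).1
    · intro hx
      have := hp1 hx
      obtain ⟨a, ha, hxa⟩ := Set.mem_iUnion₂.mp this
      exact List.mem_flatMap.mpr ⟨a, ha, (hblockmem a x).mpr ⟨(hmemlB x).mpr hx, hxa⟩⟩
  have hΘp : Θ p = (l.map f).prod * θ p.1.2 := hΘ p l hmem_l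
  have key : ∀ a ∈ l₀, ((block a).map f).prod ∈ V a := by
    intro a ha
    apply (hV₂ a ha).2.1
    refine aux_prod_mem _ (hV₂ a ha).2.2 _ ?_ ?_
    · obtain ⟨b, hbB, hbU⟩ := hp2' a ha
      have : b ∈ block a := (hblockmem a b).mpr ⟨(hmemlB b).mpr hbB, hbU⟩
      simp only [ne_eq, List.map_eq_nil_iff]
      exact List.ne_nil_of_mem this
    · intro x hx
      obtain ⟨b, hb, rfl⟩ := List.mem_map.mp hx
      have hbU : b ∈ U a := ((hblockmem a b).mp hb).2
      have : f b ∈ V₂ a := (interior_subset : interior (f ⁻¹' V₂ a) ⊆ _) hbU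
      exact ⟨this, hfe b⟩
  have hforall₂ : List.Forall₂ (fun a x => x ∈ V a) l₀
      (l₀.map fun a => ((block a).map f).prod) :=
    aux_forall₂_map_self _ _ l₀ key
  have hfin := hprod _ hforall₂ (θ p.1.2) hp3
  have heq : (l.map f).prod = (l₀.map fun a => ((block a).map f).prod).prod := by
    rw [hldef, List.map_flatMap, List.flatMap_def, List.prod_flatten, List.map_map]
    rfl
  rw [hΘp, heq]
  exact hfin
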